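/- Termination criterion of the algorithm: let F : ℝ^m → ℝ be concave and differentiable, let K ⊆ P ⊆ ℝ^m, let z_N ∈ P minimize F over P, and let ẑ ∈ K minimize the linearization z ↦ ⟨∇F(z_N), z⟩ over K. If z_N satisfies the new cut, i.e., ⟨∇F(z_N), z_N − ẑ⟩ ≥ 0, then ẑ minimizes F over K: F(ẑ) ≤ F(z) for all z ∈ K. -/

import Mathlib

open scoped RealInnerProductSpace

noncomputable section

/-- Concave + differentiable gives the linear overestimate. -/
theorem concave_grad_ineq (m : ℕ) (F : EuclideanSpace ℝ (Fin m) → ℝ)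
    (hF : ConcaveOn ℝ Set.univ F) (x y : EuclideanSpace ℝ (Fin m))
    (hdiff : DifferentiableAt ℝ F x) :
    F y ≤ F x + ⟪gradient F x, y - x⟫ := by
  set v := y - x with hv
  set g : ℝ → ℝ := fun t => -F (x + t • v) with hg
  -- g is convex on univ
  have haff : ∀ t : ℝ, (AffineMap.lineMap x y : ℝ →ᵃ[ℝ] _) t = x + t • v := by
    intro t; simp [AffineMap.lineMap_apply, hv]; abel
  have hcvx : ConvexOn ℝ Set.univ g := by
    have := (hF.neg.comp_affineMap (AffineMap.lineMap x y : ℝ →ᵃ[ℝ] _))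
    have hpre : (AffineMap.lineMap x y : ℝ →ᵃ[ℝ] _) ⁻¹' Set.univ = Set.univ := by simp
    rw [hpre] at this
    have heq : g = (-F) ∘ ⇑(AffineMap.lineMap x y : ℝ →ᵃ[ℝ] _) := by
      funext t; simp only [hg, Function.comp_apply, Pi.neg_apply, haff t]
    rw [heq]; exact this
  -- derivative of g at 0
  have hFd : HasFDerivAt F ((InnerProductSpace.toDual ℝ _) (gradient F x)) x := by
    have := hdiff.hasGradientAt
    rwa [hasGradientAt_iff_hasFDerivAt] at this
  have hline : HasDerivAt (fun t : ℝ => x + t • v) v 0 := by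
    have h1 : HasDerivAt (fun t : ℝ => t • v) ((1:ℝ) • v) 0 :=
      (hasDerivAt_id (0:ℝ)).smul_const v
    simpa using h1.const_add x
  have hgd : HasDerivAt g (-⟪gradient F x, v⟫) 0 := by
    have hFd' : HasFDerivAt F ((InnerProductSpace.toDual ℝ _) (gradient F x)) (x + (0:ℝ) • v) := by simpa using hFd
    have := (hFd'.comp_hasDerivAt 0 hline).neg
    rw [hg]; convert this using 1
    · rfl
    · rfl
    · rfl
    · simp
  have hd : DifferentiableAt ℝ g 0 := hgd.differentiableAt
  have hslope := hcvx.deriv_le_slope (Set.mem_univ (0:ℝ)) (Set.mem_univ (1:ℝ))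
    one_pos hd
  rw [hgd.deriv] at hslope
  have hs : slope g 0 1 = g 1 - g 0 := by simp [slope_def_field]
  rw [hs] at hslope
  have hg1 : g 1 = -F y := by simp [hg, hv]
  have hg0 : g 0 = -F x := by simp [hg]
  rw [hg1, hg0] at hslope
  linarith

/-- Termination criterion of the algorithm: let `F` be concave and differentiable at
`z_N`, let `K ⊆ P`, let `z_N` minimize `F` over `P`, and let `ẑ ∈ K` minimize the
linearization `z ↦ ⟨∇F(z_N), z⟩` over `K`. If `z_N` satisfies the new cut
`⟨∇F(z_N), z_N − ẑ⟩ ≥ 0`, then `ẑ` minimizes `F` over `K`. -/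
theorem cutting_plane_termination (m : ℕ) (F : EuclideanSpace ℝ (Fin m) → ℝ)
    (hF : ConcaveOn ℝ Set.univ F)
    (K P : Set (EuclideanSpace ℝ (Fin m))) (hKP : K ⊆ P)
    (zN : EuclideanSpace ℝ (Fin m)) (hdiff : DifferentiableAt ℝ F zN)
    (hzNP : zN ∈ P) (hzNmin : ∀ z ∈ P, F zN ≤ F z)
    (zhat : EuclideanSpace ℝ (Fin m)) (hzhatK : zhat ∈ K)
    (hzhatmin : ∀ z ∈ K, ⟪gradient F zN, zhat⟫ ≤ ⟪gradient F zN, z⟫)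
    (hcut : 0 ≤ ⟪gradient F zN, zN - zhat⟫) :
    ∀ z ∈ K, F zhat ≤ F z := by
  intro z hz
  have h1 : F zhat ≤ F zN + ⟪gradient F zN, zhat - zN⟫ :=
    concave_grad_ineq m F hF zN zhat hdiff
  have h2 : ⟪gradient F zN, zhat - zN⟫ = -⟪gradient F zN, zN - zhat⟫ := by
    rw [← inner_neg_right]; congr 1; abel
  have h3 : F zN ≤ F z := hzNmin z (hKP hz)
  rw [h2] at h1
  linarith
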